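/- Let A_𝔈, B_𝔈 be the (n−1)×n matrices attached to a collection of n−1 quadruples (i_s, j_s, k_s, l_s): A_𝔈 has row s with entry 1 in column i_s, −1 in column j_s, 0 elsewhere; B_𝔈 has row s with entry 1 in column k_s, −1 in column l_s, 0 elsewhere. For k ∈ {1,…,n}, let A_k, B_k be the (n−1)×(n−1) submatrices obtained by deleting column k from A_𝔈 and B_𝔈. Then sdet(A_k, B_k) is independent of k: sdet(A_1, B_1) = sdet(A_2, B_2) = ⋯ = sdet(A_n, B_n). -/

import Mathlib

/-- The `I`-shuffle of `A` and `B`: the matrix whose `i`-th row is the `i`-th row of `A`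
if `i ∈ I` and the `i`-th row of `B` otherwise. -/
def shuffleMatrix {m : ℕ} {R : Type*} (A B : Matrix (Fin m) (Fin m) R)
    (I : Finset (Fin m)) : Matrix (Fin m) (Fin m) R :=
  fun i j => if i ∈ I then A i j else B i j

/-- The shuffle determinant `sdet(A,B) = Σ_I det((A,B)_I) det((A,B)_{Ī})`. -/
def sdet {m : ℕ} {R : Type*} [CommRing R] (A B : Matrix (Fin m) (Fin m) R) : R :=
  ∑ I : Finset (Fin m), (shuffleMatrix A B I).det * (shuffleMatrix A B Iᶜ).det

/-- The `(n−1) × n` matrix (here `n = m + 1`) whose row `s` has entry `1` in column `i s`,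
`−1` in column `j s` and `0` elsewhere. -/
def quadMatrix {m : ℕ} {R : Type*} [CommRing R] (i j : Fin m → Fin (m + 1)) :
    Matrix (Fin m) (Fin (m + 1)) R :=
  fun s t => if t = i s then 1 else if t = j s then -1 else 0

/-- Key lemma: for a matrix whose rows each sum to zero, deleting different columns
changes the determinant only by a fixed sign. -/
lemma det_delete_column_sign {m : ℕ} {R : Type*} [CommRing R] (c c' : Fin (m + 1)) :
    ∃ ε : R, ε * ε = 1 ∧ ∀ M : Matrix (Fin m) (Fin (m + 1)) R, (∀ s, ∑ t, M s t = 0) →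
      (M.submatrix id c.succAbove).det = ε * (M.submatrix id c'.succAbove).det := by
  rcases eq_or_ne c c' with rfl | hcc
  · exact ⟨1, by ring, fun M _ => by ring⟩
  obtain ⟨a, ha⟩ := Fin.exists_succAbove_eq hcc
  set f : Fin m → Fin (m + 1) := Function.update c'.succAbove a c' with hfdef
  have hf : ∀ b, f b ≠ c := by
    intro b
    rcases eq_or_ne b a with rfl | hba
    · simpa [hfdef] using hcc.symm
    · rw [hfdef, Function.update_of_ne hba]
      intro h
      exact hba (Fin.succAbove_right_injective (h.trans ha.symm))
  choose g hg using fun b => Fin.exists_succAbove_eq (hf b)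
  have hfinj : Function.Injective f := by
    intro x y hxy
    by_cases hx : x = a <;> by_cases hy : y = a
    · rw [hx, hy]
    · rw [hx, hfdef, Function.update_self, Function.update_of_ne hy] at hxy
      exact absurd hxy.symm (Fin.succAbove_ne _ _)
    · rw [hy, hfdef, Function.update_self, Function.update_of_ne hx] at hxy
      exact absurd hxy (Fin.succAbove_ne _ _)
    · rw [hfdef, Function.update_of_ne hx, Function.update_of_ne hy] at hxy
      exact Fin.succAbove_right_injective hxy
  have hginj : Function.Injective g := by
    intro x y hxy
    apply hfinj
    rw [← hg x, ← hg y, hxy]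
  let σ : Equiv.Perm (Fin m) := Equiv.ofBijective g (Finite.injective_iff_bijective.mp hginj)
  refine ⟨-((Equiv.Perm.sign σ : ℤ) : R), ?_, ?_⟩
  · have h1 : (Equiv.Perm.sign σ) * (Equiv.Perm.sign σ) = 1 := by
      rcases Int.units_eq_one_or (Equiv.Perm.sign σ) with h | h <;> rw [h] <;> rfl
    have : ((Equiv.Perm.sign σ : ℤ) : R) * ((Equiv.Perm.sign σ : ℤ) : R) = 1 := by
      rw [← Int.cast_mul, ← Units.val_mul, h1]; simp
    linear_combination this
  intro M hM
  set X := M.submatrix id c'.succAbove with hX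
  have hcol : ∀ s, (fun s => ∑ b, (1 : R) • X s b) s = -M s c' := by
    intro s
    have h := Fin.sum_univ_succAbove (M s) c'
    rw [hM s] at h
    simp only [one_smul]
    have : ∑ b, X s b = ∑ b, M s (c'.succAbove b) := rfl
    rw [this]
    linear_combination -h
  have h1 : (X.updateCol a (fun s => -M s c')).det = X.det := by
    have := Matrix.det_updateCol_sum X a (fun _ => (1 : R))
    rw [funext hcol] at this
    rw [this, one_smul]
  have h2 : (X.updateCol a (fun s => -M s c')).det
      = -(X.updateCol a (fun s => M s c')).det := by
    have := Matrix.det_updateCol_smul X a (-1 : R) (fun s => M s c')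
    rw [show (fun s => -M s c') = (-1 : R) • (fun s => M s c') by ext; simp, this]; ring
  have h3 : X.updateCol a (fun s => M s c') = M.submatrix id f := by
    ext s b
    rcases eq_or_ne b a with rfl | hb
    · simp [hfdef, Matrix.updateCol_apply]
    · simp [Matrix.updateCol_apply, hb, hfdef, Function.update_of_ne hb, hX]
  have h4 : M.submatrix id f = (M.submatrix id c.succAbove).submatrix id σ := by
    ext s b
    simp [Matrix.submatrix_apply, σ, Equiv.ofBijective_apply, hg b]
  have h5 : ((M.submatrix id c.succAbove).submatrix id σ).det
      = ((Equiv.Perm.sign σ : ℤ) : R) * (M.submatrix id c.succAbove).det :=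
    Matrix.det_permute' σ _
  have hsign : ((Equiv.Perm.sign σ : ℤ) : R) * ((Equiv.Perm.sign σ : ℤ) : R) = 1 := by
    rcases Int.units_eq_one_or (Equiv.Perm.sign σ) with h | h <;> rw [h] <;> push_cast <;> ring
  have : X.det = -(((Equiv.Perm.sign σ : ℤ) : R) * (M.submatrix id c.succAbove).det) := by
    rw [← h5, ← h4, ← h3, ← h2, h1]
  rw [this]; linear_combination (-(M.submatrix id c.succAbove).det) * hsign

lemma quad_row_sum {m : ℕ} {R : Type*} [CommRing R] (i j : Fin m → Fin (m + 1))
    (hij : ∀ s, i s ≠ j s) (s : Fin m) : ∑ t, quadMatrix i j (R := R) s t = 0 := by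
  have hsplit : ∀ t : Fin (m + 1), quadMatrix i j (R := R) s t
      = (if t = i s then (1 : R) else 0) + (if t = j s then (-1 : R) else 0) := by
    intro t
    unfold quadMatrix
    split_ifs with h1 h2 <;> simp_all [(hij s).symm]
  rw [Finset.sum_congr rfl fun t _ => hsplit t, Finset.sum_add_distrib]
  simp

/-- Given `n − 1` quadruples `(i_s, j_s, k_s, l_s)` (with `i_s ≠ j_s`, `k_s ≠ l_s`), form
the `(n−1) × n` matrices `A_𝔈`, `B_𝔈` and delete a column `c` to get square matrices
`A_c`, `B_c`.  Then `sdet(A_c, B_c)` does not depend on the deleted column `c`. -/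
theorem sdet_deleted_column_independent {m : ℕ} {R : Type*} [CommRing R]
    (i j k l : Fin m → Fin (m + 1))
    (hij : ∀ s, i s ≠ j s) (hkl : ∀ s, k s ≠ l s) (c c' : Fin (m + 1)) :
    sdet ((quadMatrix i j (R := R)).submatrix id c.succAbove)
        ((quadMatrix k l (R := R)).submatrix id c.succAbove) =
      sdet ((quadMatrix i j (R := R)).submatrix id c'.succAbove)
        ((quadMatrix k l (R := R)).submatrix id c'.succAbove) := by
  set N : Finset (Fin m) → Matrix (Fin m) (Fin (m + 1)) R :=
    fun I s t => if s ∈ I then quadMatrix i j (R := R) s t else quadMatrix k l (R := R) s t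
    with hN
  have hshuf : ∀ (e : Fin m → Fin (m + 1)) (I : Finset (Fin m)),
      shuffleMatrix ((quadMatrix i j (R := R)).submatrix id e)
        ((quadMatrix k l (R := R)).submatrix id e) I = (N I).submatrix id e := by
    intro e I
    ext s t
    by_cases hs : s ∈ I <;> simp [shuffleMatrix, hN, hs] <;> simp [Matrix.submatrix, hs]
  have hrow : ∀ (I : Finset (Fin m)) (s : Fin m), ∑ t, N I s t = 0 := by
    intro I s
    by_cases hs : s ∈ I <;>
      simp [hN, hs, quad_row_sum i j hij s, quad_row_sum k l hkl s]
  obtain ⟨ε, hε, hdet⟩ := det_delete_column_sign (R := R) c c'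
  unfold sdet
  refine Finset.sum_congr rfl fun I _ => ?_
  rw [hshuf c.succAbove I, hshuf c.succAbove Iᶜ, hshuf c'.succAbove I, hshuf c'.succAbove Iᶜ,
    hdet (N I) (hrow I), hdet (N Iᶜ) (hrow Iᶜ)]
  linear_combination (((N I).submatrix id c'.succAbove).det *
    ((N Iᶜ).submatrix id c'.succAbove).det) * hε
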